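/- For a constant α with 0 < α ≤ 12, the function p(x,y) = |x − y|/√((x − y)² + αxy) on the positive real axis ℝ⁺ satisfies the triangle inequality p(x,y) ≤ p(x,z) + p(z,y) for all x, y, z > 0, and hence is a metric on ℝ⁺. -/

import Mathlib

noncomputable def ppfF (c t : ℝ) : ℝ := Real.sinh t / Real.sqrt (Real.sinh t ^ 2 + c)

lemma ppf_pos_aux {c : ℝ} (hc : 0 < c) (t : ℝ) : 0 < Real.sinh t ^ 2 + c := by positivity

lemma ppfF_hasDeriv {c : ℝ} (hc : 0 < c) (t : ℝ) :
    HasDerivAt (ppfF c) (c * Real.cosh t / Real.sqrt (Real.sinh t ^ 2 + c) ^ 3) t := by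
  have hX : 0 < Real.sinh t ^ 2 + c := ppf_pos_aux hc t
  have hsq : Real.sqrt (Real.sinh t ^ 2 + c) ^ 2 = Real.sinh t ^ 2 + c :=
    Real.sq_sqrt hX.le
  have hsqrt_pos : 0 < Real.sqrt (Real.sinh t ^ 2 + c) := Real.sqrt_pos.mpr hX
  have hs : HasDerivAt Real.sinh (Real.cosh t) t := Real.hasDerivAt_sinh t
  have h1 : HasDerivAt (fun u => Real.sinh u ^ 2 + c)
      (2 * Real.sinh t * Real.cosh t) t := by
    have := (hs.pow 2).add_const c
    simpa [mul_comm, mul_assoc] using this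
  have h2 : HasDerivAt (fun u => Real.sqrt (Real.sinh u ^ 2 + c))
      (Real.sinh t * Real.cosh t / Real.sqrt (Real.sinh t ^ 2 + c)) t := by
    have h := (Real.hasDerivAt_sqrt hX.ne').comp t h1
    refine h.congr_deriv (Eq.symm ?_)
    field_simp
  have h3 := hs.div h2 hsqrt_pos.ne'
  refine h3.congr_deriv (Eq.symm ?_)
  field_simp
  linear_combination (-1 : ℝ) * hsq

lemma ppf_poly {c s t : ℝ} (hc : 0 < c) (hc3 : c ≤ 3) (hs : 0 ≤ s) (hst : s ≤ t) :
    (1 + t) * (s + c) ^ 3 ≤ (1 + s) * (t + c) ^ 3 := by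
  nlinarith [mul_nonneg (sub_nonneg.mpr hst)
      (by nlinarith [sq_nonneg c, mul_nonneg hs (hs.trans hst), mul_nonneg (mul_nonneg hs (hs.trans hst)) (add_nonneg hs (hs.trans hst))] :
        (0:ℝ) ≤ s^2 + s*t + t^2 + 3*c*(s+t) + s*t*(s+t) + 3*c*s*t + 3*c^2 - c^3)]

lemma ppfF_concave {c : ℝ} (hc : 0 < c) (hc3 : c ≤ 3) :
    ConcaveOn ℝ (Set.Ici (0:ℝ)) (ppfF c) := by
  have hderiv : ∀ t, deriv (ppfF c) t = c * Real.cosh t / Real.sqrt (Real.sinh t ^ 2 + c) ^ 3 :=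
    fun t => (ppfF_hasDeriv hc t).deriv
  refine AntitoneOn.concaveOn_of_deriv (convex_Ici 0) ?_ ?_ ?_
  · exact fun t _ => ((ppfF_hasDeriv hc t).continuousAt).continuousWithinAt
  · exact fun t _ => ((ppfF_hasDeriv hc t).differentiableAt).differentiableWithinAt
  · rw [interior_Ici]
    intro a ha b hb hab
    rw [hderiv, hderiv]
    have ha0 : (0:ℝ) ≤ a := le_of_lt ha
    have hsa : 0 ≤ Real.sinh a := Real.sinh_nonneg_iff.mpr ha0
    have hsab : Real.sinh a ≤ Real.sinh b := Real.sinh_le_sinh.mpr hab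
    have hXa : 0 < Real.sinh a ^ 2 + c := ppf_pos_aux hc a
    have hXb : 0 < Real.sinh b ^ 2 + c := ppf_pos_aux hc b
    have hqa : 0 < Real.sqrt (Real.sinh a ^ 2 + c) := Real.sqrt_pos.mpr hXa
    have hqb : 0 < Real.sqrt (Real.sinh b ^ 2 + c) := Real.sqrt_pos.mpr hXb
    have hsqa : Real.sqrt (Real.sinh a ^ 2 + c) ^ 2 = Real.sinh a ^ 2 + c := Real.sq_sqrt hXa.le
    have hsqb : Real.sqrt (Real.sinh b ^ 2 + c) ^ 2 = Real.sinh b ^ 2 + c := Real.sq_sqrt hXb.le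
    have hca : 0 < Real.cosh a := Real.cosh_pos a
    have hcb : 0 < Real.cosh b := Real.cosh_pos b
    rw [div_le_div_iff₀ (by positivity) (by positivity)]
    -- need : c * cosh b * qa^3 ≤ c * cosh a * qb^3
    have key : (1 + Real.sinh b ^ 2) * (Real.sinh a ^ 2 + c) ^ 3
        ≤ (1 + Real.sinh a ^ 2) * (Real.sinh b ^ 2 + c) ^ 3 :=
      ppf_poly hc hc3 (by positivity) (by nlinarith)
    have hch2a : Real.cosh a ^ 2 = 1 + Real.sinh a ^ 2 := Real.cosh_sq' a
    have hch2b : Real.cosh b ^ 2 = 1 + Real.sinh b ^ 2 := Real.cosh_sq' b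
    have hsq : (Real.cosh b * Real.sqrt (Real.sinh a ^ 2 + c) ^ 3) ^ 2
        ≤ (Real.cosh a * Real.sqrt (Real.sinh b ^ 2 + c) ^ 3) ^ 2 := by
      have e1 : (Real.cosh b * Real.sqrt (Real.sinh a ^ 2 + c) ^ 3) ^ 2
          = Real.cosh b ^ 2 * ((Real.sinh a ^ 2 + c) ^ 2 * (Real.sinh a ^ 2 + c)) := by
        rw [mul_pow, ← pow_mul]
        rw [show (3*2 : ℕ) = 2*2+2 by rfl, pow_add, pow_mul, hsqa]
        try ring
      have e2 : (Real.cosh a * Real.sqrt (Real.sinh b ^ 2 + c) ^ 3) ^ 2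
          = Real.cosh a ^ 2 * ((Real.sinh b ^ 2 + c) ^ 2 * (Real.sinh b ^ 2 + c)) := by
        rw [mul_pow, ← pow_mul]
        rw [show (3*2 : ℕ) = 2*2+2 by rfl, pow_add, pow_mul, hsqb]
        try ring
      rw [e1, e2, hch2a, hch2b]
      nlinarith [key]
    have h1 : 0 ≤ Real.cosh b * Real.sqrt (Real.sinh a ^ 2 + c) ^ 3 := by positivity
    have h2 : 0 ≤ Real.cosh a * Real.sqrt (Real.sinh b ^ 2 + c) ^ 3 := by positivity
    have hXY : Real.cosh b * Real.sqrt (Real.sinh a ^ 2 + c) ^ 3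
        ≤ Real.cosh a * Real.sqrt (Real.sinh b ^ 2 + c) ^ 3 := by
      have := Real.sqrt_le_sqrt hsq
      rwa [Real.sqrt_sq h1, Real.sqrt_sq h2] at this
    nlinarith [mul_le_mul_of_nonneg_left hXY hc.le]

lemma ppfF_zero (c : ℝ) : ppfF c 0 = 0 := by simp [ppfF]

lemma ppfF_mono {c : ℝ} (hc : 0 < c) {a b : ℝ} (ha : 0 ≤ a) (hab : a ≤ b) :
    ppfF c a ≤ ppfF c b := by
  have hsa : 0 ≤ Real.sinh a := Real.sinh_nonneg_iff.mpr ha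
  have hsab : Real.sinh a ≤ Real.sinh b := Real.sinh_le_sinh.mpr hab
  have hXa : 0 < Real.sinh a ^ 2 + c := ppf_pos_aux hc a
  have hXb : 0 < Real.sinh b ^ 2 + c := ppf_pos_aux hc b
  rw [ppfF, ppfF, div_le_div_iff₀ (Real.sqrt_pos.mpr hXa) (Real.sqrt_pos.mpr hXb)]
  have e1 : Real.sinh a * Real.sqrt (Real.sinh b ^ 2 + c)
      = Real.sqrt (Real.sinh a ^ 2 * (Real.sinh b ^ 2 + c)) := by
    rw [Real.sqrt_mul (sq_nonneg _), Real.sqrt_sq hsa]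
  have e2 : Real.sinh b * Real.sqrt (Real.sinh a ^ 2 + c)
      = Real.sqrt (Real.sinh b ^ 2 * (Real.sinh a ^ 2 + c)) := by
    rw [Real.sqrt_mul (sq_nonneg _), Real.sqrt_sq (hsa.trans hsab)]
  rw [e1, e2]
  apply Real.sqrt_le_sqrt
  nlinarith [mul_le_mul_of_nonneg_left (pow_le_pow_left₀ hsa hsab 2) hc.le]

lemma ppfF_subadd {c : ℝ} (hc : 0 < c) (hc3 : c ≤ 3) {a b : ℝ} (ha : 0 ≤ a) (hb : 0 ≤ b) :
    ppfF c (a + b) ≤ ppfF c a + ppfF c b := by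
  rcases eq_or_lt_of_le ha with rfl | ha'
  · simp [ppfF_zero]
  rcases eq_or_lt_of_le hb with rfl | hb'
  · simp [ppfF_zero]
  have hab : 0 < a + b := by linarith
  have hconc := (ppfF_concave hc hc3).2
  have mem1 : (a + b) ∈ Set.Ici (0:ℝ) := Set.mem_Ici.mpr hab.le
  have mem0 : (0:ℝ) ∈ Set.Ici (0:ℝ) := Set.mem_Ici.mpr le_rfl
  have h1 : (a / (a + b)) * ppfF c (a + b) ≤ ppfF c a := by
    have hxy : (a/(a+b)) • ((a+b):ℝ) + (b/(a+b)) • (0:ℝ) = a := by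
      simp [smul_eq_mul]; field_simp
    have := hconc mem1 mem0 (div_pos ha' hab).le (div_pos hb' hab).le (by field_simp)
    rw [hxy, ppfF_zero] at this
    simpa [smul_eq_mul] using this
  have h2 : (b / (a + b)) * ppfF c (a + b) ≤ ppfF c b := by
    have hxy : (b/(a+b)) • ((a+b):ℝ) + (a/(a+b)) • (0:ℝ) = b := by
      simp [smul_eq_mul]; field_simp
    have := hconc mem1 mem0 (div_pos hb' hab).le (div_pos ha' hab).le (by field_simp; ring)
    rw [hxy, ppfF_zero] at this
    simpa [smul_eq_mul] using this
  have hsum : (a / (a + b)) * ppfF c (a + b) + (b / (a + b)) * ppfF c (a + b)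
      = ppfF c (a + b) := by field_simp
  linarith

lemma sinh_abs' (z : ℝ) : Real.sinh |z| = |Real.sinh z| := by
  rcases le_or_gt 0 z with h | h
  · rw [abs_of_nonneg h, abs_of_nonneg (Real.sinh_nonneg_iff.mpr h)]
  · rw [abs_of_neg h, Real.sinh_neg, abs_of_neg (by simpa using Real.sinh_lt_sinh.mpr h)]

lemma exp_half_log {x : ℝ} (hx : 0 < x) : Real.exp (Real.log x / 2) = Real.sqrt x := by
  rw [Real.sqrt_eq_rpow, Real.rpow_def_of_pos hx]
  ring_nf

lemma sinh_half_log {x y : ℝ} (hx : 0 < x) (hy : 0 < y) :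
    Real.sinh ((Real.log x - Real.log y) / 2)
      = (x - y) / (2 * Real.sqrt x * Real.sqrt y) := by
  have hsx : 0 < Real.sqrt x := Real.sqrt_pos.mpr hx
  have hsy : 0 < Real.sqrt y := Real.sqrt_pos.mpr hy
  have hx2 : Real.sqrt x ^ 2 = x := Real.sq_sqrt hx.le
  have hy2 : Real.sqrt y ^ 2 = y := Real.sq_sqrt hy.le
  rw [Real.sinh_eq]
  have e1 : Real.exp ((Real.log x - Real.log y) / 2) = Real.sqrt x / Real.sqrt y := by
    rw [sub_div, Real.exp_sub, exp_half_log hx, exp_half_log hy]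
  have e2 : Real.exp (-((Real.log x - Real.log y) / 2)) = Real.sqrt y / Real.sqrt x := by
    rw [← neg_div, neg_sub, sub_div, Real.exp_sub, exp_half_log hy, exp_half_log hx]
  rw [e1, e2]
  field_simp [hsx.ne', hsy.ne']
  rw [hx2, hy2]

lemma ppf_repr {c x y : ℝ} (hc : 0 < c) (hx : 0 < x) (hy : 0 < y) :
    |x - y| / Real.sqrt ((x - y)^2 + (4*c)*x*y)
      = ppfF c (|Real.log x - Real.log y| / 2) := by
  have hsx : 0 < Real.sqrt x := Real.sqrt_pos.mpr hx
  have hsy : 0 < Real.sqrt y := Real.sqrt_pos.mpr hy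
  set w : ℝ := 2 * Real.sqrt x * Real.sqrt y with hw_def
  have hw : 0 < w := by positivity
  have hw2 : w ^ 2 = 4 * (x * y) := by
    rw [hw_def]
    have hx2 : Real.sqrt x ^ 2 = x := Real.sq_sqrt hx.le
    have hy2 : Real.sqrt y ^ 2 = y := Real.sq_sqrt hy.le
    nlinarith [hx2, hy2]
  have habs : |Real.log x - Real.log y| / 2 = |(Real.log x - Real.log y) / 2| := by
    rw [abs_div]; simp
  have hsinh : Real.sinh (|Real.log x - Real.log y| / 2) = |x - y| / w := by
    rw [habs, sinh_abs', sinh_half_log hx hy, abs_div, abs_of_pos hw]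
  rw [ppfF, hsinh]
  have hsq : (|x - y| / w) ^ 2 = (x - y)^2 / w^2 := by
    rw [div_pow, sq_abs]
  rw [hsq]
  have e3 : (x - y)^2 / w^2 + c = ((x - y)^2 + (4*c)*x*y) / w^2 := by
    field_simp
    nlinarith [hw2]
  rw [e3, Real.sqrt_div (by positivity), Real.sqrt_sq hw.le]
  have hS : 0 < Real.sqrt ((x - y)^2 + (4*c)*x*y) := Real.sqrt_pos.mpr (by positivity)
  field_simp

theorem ppf_alpha_Rpos_metric (α : ℝ) (h0 : 0 < α) (h12 : α ≤ 12)
    (p : ℝ → ℝ → ℝ)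
    (hp : ∀ x y, p x y = |x - y| / Real.sqrt ((x - y)^2 + α*x*y)) :
    (∀ x y z : ℝ, 0 < x → 0 < y → 0 < z → p x y ≤ p x z + p z y) ∧
    (∀ x y : ℝ, 0 < x → 0 < y → p x y = p y x) ∧
    (∀ x y : ℝ, 0 < x → 0 < y → (p x y = 0 ↔ x = y)) := by
  set c : ℝ := α / 4 with hc_def
  have hc : 0 < c := by positivity
  have hc3 : c ≤ 3 := by rw [hc_def]; linarith
  have h4c : 4 * c = α := by rw [hc_def]; ring
  have hrepr : ∀ x y : ℝ, 0 < x → 0 < y →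
      p x y = ppfF c (|Real.log x - Real.log y| / 2) := by
    intro x y hx hy
    rw [hp, ← ppf_repr hc hx hy, h4c]
  refine ⟨?_, ?_, ?_⟩
  · intro x y z hx hy hz
    rw [hrepr x y hx hy, hrepr x z hx hz, hrepr z y hz hy]
    have htri : |Real.log x - Real.log y| / 2
        ≤ |Real.log x - Real.log z| / 2 + |Real.log z - Real.log y| / 2 := by
      have := abs_sub_le (Real.log x) (Real.log z) (Real.log y)
      linarith
    calc ppfF c (|Real.log x - Real.log y| / 2)
        ≤ ppfF c (|Real.log x - Real.log z| / 2 + |Real.log z - Real.log y| / 2) :=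
          ppfF_mono hc (by positivity) htri
      _ ≤ _ := ppfF_subadd hc hc3 (by positivity) (by positivity)
  · intro x y hx hy
    rw [hp, hp, abs_sub_comm]
    have : (x - y)^2 + α*x*y = (y - x)^2 + α*y*x := by ring
    rw [this]
  · intro x y hx hy
    rw [hp]
    have hS : 0 < Real.sqrt ((x - y)^2 + α*x*y) :=
      Real.sqrt_pos.mpr (by positivity)
    rw [div_eq_zero_iff]
    constructor
    · rintro (h | h)
      · exact sub_eq_zero.mp (abs_eq_zero.mp h)
      · exact absurd h hS.ne'
    · intro h
      left
      rw [h]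
      simp
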